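/- arXiv:2501.05377 — 3 statements merged into one kernel-verified Lean document; each statement's English description precedes it below -/
import Mathlib

section
/- Let β be a positive natural number and let C, A₁, A₂, V₁, V₂ be finite sets with C ⊆ A₁, C ⊆ A₂, |C| ≥ β, 2·|A₁| < 3·β, 2·|A₂| < 3·β, V₁ ⊆ A₁, V₂ ⊆ A₂, |V₁| ≥ β, and |V₂| ≥ β. Then V₁ ∩ V₂ ∩ C is nonempty. -/
theorem stmt_9 {α : Type} [DecidableEq α] (β : ℕ) (hβ : 0 < β)
    (C A₁ A₂ V₁ V₂ : Finset α) (hCA₁ : C ⊆ A₁) (hCA₂ : C ⊆ A₂)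
    (hC : β ≤ C.card) (hA₁ : 2 * A₁.card < 3 * β) (hA₂ : 2 * A₂.card < 3 * β)
    (hV₁A : V₁ ⊆ A₁) (hV₂A : V₂ ⊆ A₂) (hV₁ : β ≤ V₁.card) (hV₂ : β ≤ V₂.card) :
    (V₁ ∩ V₂ ∩ C).Nonempty := by
  have h1 := Finset.card_union_add_card_inter V₁ C
  have h2 := Finset.card_union_add_card_inter V₂ C
  have h3 := Finset.card_union_add_card_inter (V₁ ∩ C) (V₂ ∩ C)
  have hu1 : (V₁ ∪ C).card ≤ A₁.card :=
    Finset.card_le_card (Finset.union_subset hV₁A hCA₁)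
  have hu2 : (V₂ ∪ C).card ≤ A₂.card :=
    Finset.card_le_card (Finset.union_subset hV₂A hCA₂)
  have hu3 : ((V₁ ∩ C) ∪ (V₂ ∩ C)).card ≤ C.card :=
    Finset.card_le_card (Finset.union_subset (Finset.inter_subset_right)
      (Finset.inter_subset_right))
  have heq : V₁ ∩ V₂ ∩ C = (V₁ ∩ C) ∩ (V₂ ∩ C) := by
    ext x; simp [Finset.mem_inter]
  rw [heq, ← Finset.card_pos]
  omega
end

section
/- Let β, s, t be natural numbers with β ≥ 1 and s > 4·t. Let S be a finite index set with s − t ≤ |S| ≤ s, let C be a finite set with |C| ≥ β, and for each w ∈ S let A_w be a finite set with C ⊆ A_w and 4·|A_w| < 5·β. Let D be the set of elements x ∉ C such that x belongs to A_w for at least s − 2·t indices w ∈ S. Then 2·(|C| + |D|) < 3·β. -/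
theorem stmt_11 {ι α : Type} [DecidableEq ι] [DecidableEq α]
    (β s t : ℕ) (hβ : 1 ≤ β) (hs : 4 * t < s)
    (S : Finset ι) (hS_lb : (s : ℤ) - t ≤ S.card) (hS_ub : S.card ≤ s)
    (C : Finset α) (hC : β ≤ C.card)
    (A : ι → Finset α)
    (hCA : ∀ w ∈ S, C ⊆ A w) (hA : ∀ w ∈ S, 4 * (A w).card < 5 * β)
    (D : Finset α)
    (hD : ∀ x : α, x ∈ D ↔
      x ∉ C ∧ (s : ℤ) - 2 * t ≤ (S.filter fun w => x ∈ A w).card) :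
    2 * (C.card + D.card) < 3 * β := by
  have hSne : S.Nonempty := by
    rw [← Finset.card_pos]
    omega
  -- double counting
  have swap : ∑ x ∈ D, (S.filter fun w => x ∈ A w).card
      = ∑ w ∈ S, (D.filter fun x => x ∈ A w).card := by
    simp only [Finset.card_filter]
    exact Finset.sum_comm
  have key : (D.card : ℤ) * ((s : ℤ) - 2 * t) ≤ ∑ w ∈ S, ((A w \ C).card : ℤ) := by
    calc (D.card : ℤ) * ((s : ℤ) - 2 * t) = ∑ _x ∈ D, ((s : ℤ) - 2 * t) := by
          rw [Finset.sum_const, nsmul_eq_mul, mul_comm]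
      _ ≤ ∑ x ∈ D, ((S.filter fun w => x ∈ A w).card : ℤ) :=
          Finset.sum_le_sum fun x hx => ((hD x).1 hx).2
      _ = ∑ w ∈ S, ((D.filter fun x => x ∈ A w).card : ℤ) := by
          push_cast [← Nat.cast_sum]
          exact_mod_cast congrArg (Nat.cast : ℕ → ℤ) swap
      _ ≤ ∑ w ∈ S, ((A w \ C).card : ℤ) := by
          apply Finset.sum_le_sum
          intro w _
          have : (D.filter fun x => x ∈ A w) ⊆ A w \ C := by
            intro x hx
            rw [Finset.mem_filter] at hx
            rw [Finset.mem_sdiff]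
            exact ⟨hx.2, ((hD x).1 hx.1).1⟩
          exact_mod_cast Finset.card_le_card this
  have bound : 4 * ∑ w ∈ S, ((A w \ C).card : ℤ)
      < S.card * (5 * β - 4 * C.card) := by
    rw [Finset.mul_sum]
    calc ∑ w ∈ S, 4 * ((A w \ C).card : ℤ)
        < ∑ _w ∈ S, ((5 : ℤ) * β - 4 * C.card) := by
          apply Finset.sum_lt_sum_of_nonempty hSne
          intro w hw
          have h1 : C.card ≤ (A w).card := Finset.card_le_card (hCA w hw)
          have h2 : (A w \ C).card = (A w).card - C.card :=
            Finset.card_sdiff_of_subset (hCA w hw)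
          have h3 := hA w hw
          rw [h2]
          have : ((A w).card - C.card : ℤ) = ((A w).card : ℤ) - C.card := by
            push_cast [Nat.cast_sub h1]; ring
          push_cast [Nat.cast_sub h1]
          push_cast at h3
          linarith
      _ = S.card * (5 * β - 4 * C.card) := by
          rw [Finset.sum_const, nsmul_eq_mul]
  obtain ⟨w0, hw0⟩ := hSne
  have hc5 : 4 * (C.card : ℤ) < 5 * β := by
    have h1 : C.card ≤ (A w0).card := Finset.card_le_card (hCA w0 hw0)
    have h3 := hA w0 hw0
    push_cast
    omega
  have hmain : 4 * ((D.card : ℤ) * ((s : ℤ) - 2 * t)) < (s : ℤ) * (5 * β - 4 * C.card) := by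
    calc 4 * ((D.card : ℤ) * ((s : ℤ) - 2 * t)) ≤ 4 * ∑ w ∈ S, ((A w \ C).card : ℤ) := by
          linarith
      _ < S.card * (5 * β - 4 * C.card) := bound
      _ ≤ (s : ℤ) * (5 * β - 4 * C.card) := by
          apply mul_le_mul_of_nonneg_right _ (by linarith)
          exact_mod_cast hS_ub
  have hd0 : (0 : ℤ) ≤ D.card := Int.natCast_nonneg _
  have hst : 2 * (s : ℤ) ≤ 4 * ((s : ℤ) - 2 * t) := by
    have : (4 * t : ℤ) < s := by exact_mod_cast hs
    linarith
  have h2 : (s : ℤ) * (2 * D.card) < (s : ℤ) * (5 * β - 4 * C.card) := by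
    nlinarith
  have hs0 : (0 : ℤ) < s := by
    have : (4 * t : ℤ) < s := by exact_mod_cast hs
    linarith
  have h3 : 2 * (D.card : ℤ) < 5 * β - 4 * C.card := lt_of_mul_lt_mul_left h2 (le_of_lt hs0)
  have hCz : (β : ℤ) ≤ C.card := by exact_mod_cast hC
  have : 2 * ((C.card : ℤ) + D.card) < 3 * β := by linarith
  exact_mod_cast this
end

section
/- Let β, ζ, Y, r be natural numbers with β ≥ 1, ζ ≥ 1, 16·Y < ζ, and 4·r > ζ. Let H be a finite index set with |H| + Y = r, let C be a finite set with |C| ≥ β, and for each w ∈ H let B_w be a finite set with C ⊆ B_w and 4·|B_w| < 5·β. Let D be the set of elements x ∉ C such that 16·|{w ∈ H : x ∈ B_w}| ≥ 16·r − ζ − 16·Y. Then 2·(|C| + |D|) < 3·β. -/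
theorem stmt_12 {ι α : Type} [DecidableEq ι] [DecidableEq α]
    (β ζ Y r : ℕ) (hβ : 1 ≤ β) (hζ : 1 ≤ ζ) (hY : 16 * Y < ζ) (hr : ζ < 4 * r)
    (H : Finset ι) (hH : H.card + Y = r)
    (C : Finset α) (hC : β ≤ C.card)
    (B : ι → Finset α)
    (hCB : ∀ w ∈ H, C ⊆ B w) (hB : ∀ w ∈ H, 4 * (B w).card < 5 * β)
    (D : Finset α)
    (hD : ∀ x : α, x ∈ D ↔
      x ∉ C ∧ (16 * r : ℤ) - ζ - 16 * Y ≤ 16 * (H.filter fun w => x ∈ B w).card) :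
    2 * (C.card + D.card) < 3 * β := by
  have hHne : H.Nonempty := Finset.card_pos.mp (by omega)
  obtain ⟨w₀, hw₀⟩ := hHne
  have hcB : C.card ≤ (B w₀).card := Finset.card_le_card (hCB w₀ hw₀)
  have hc : 4 * C.card < 5 * β := lt_of_le_of_lt (by omega) (hB w₀ hw₀)
  -- double counting
  have hsum : ∑ x ∈ D, (H.filter fun w => x ∈ B w).card
      = ∑ w ∈ H, (D.filter fun x => x ∈ B w).card := by
    simp_rw [Finset.card_filter]
    exact Finset.sum_comm
  -- per-w bound in ℤ
  have hper : ∀ w ∈ H, 4 * ((D.filter fun x => x ∈ B w).card : ℤ)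
      ≤ 5 * (β : ℤ) - 4 * C.card - 1 := by
    intro w hw
    have hsub : (D.filter fun x => x ∈ B w) ⊆ (B w) \ C := by
      intro x hx
      simp only [Finset.mem_filter] at hx
      exact Finset.mem_sdiff.mpr ⟨hx.2, ((hD x).mp hx.1).1⟩
    have h1 : (D.filter fun x => x ∈ B w).card ≤ ((B w) \ C).card :=
      Finset.card_le_card hsub
    have h2 : ((B w) \ C).card = (B w).card - C.card := Finset.card_sdiff_of_subset (hCB w hw)
    have h3 : C.card ≤ (B w).card := Finset.card_le_card (hCB w hw)
    have h4 : 4 * (B w).card < 5 * β := hB w hw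
    rw [h2] at h1
    omega
  set T : ℤ := 16 * r - ζ - 16 * Y with hT
  have hTζ : 2 * (ζ : ℤ) ≤ T := by
    rw [hT]; push_cast; omega
  have hTpos : 0 < T := by
    have : (1 : ℤ) ≤ ζ := by exact_mod_cast hζ
    linarith
  -- lower bound on the sum over D
  have h1 : (D.card : ℤ) * T ≤ ∑ x ∈ D, 16 * ((H.filter fun w => x ∈ B w).card : ℤ) := by
    calc (D.card : ℤ) * T = ∑ _x ∈ D, T := by
          rw [Finset.sum_const, nsmul_eq_mul]
      _ ≤ _ := Finset.sum_le_sum fun x hx => by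
          have := ((hD x).mp hx).2
          rw [hT]
          linarith
  have h2 : ∑ x ∈ D, 16 * ((H.filter fun w => x ∈ B w).card : ℤ)
      = 16 * ∑ w ∈ H, ((D.filter fun x => x ∈ B w).card : ℤ) := by
    rw [← Finset.mul_sum]
    congr 1
    push_cast
    exact_mod_cast congrArg (Nat.cast : ℕ → ℤ) hsum
  have h3 : ∑ w ∈ H, 4 * ((D.filter fun x => x ∈ B w).card : ℤ)
      ≤ H.card * (5 * (β : ℤ) - 4 * C.card - 1) := by
    calc ∑ w ∈ H, 4 * ((D.filter fun x => x ∈ B w).card : ℤ)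
        ≤ ∑ _w ∈ H, (5 * (β : ℤ) - 4 * C.card - 1) := Finset.sum_le_sum hper
      _ = H.card * (5 * (β : ℤ) - 4 * C.card - 1) := by
          rw [Finset.sum_const, nsmul_eq_mul]
  have hHT : 16 * (H.card : ℤ) = T + ζ := by
    rw [hT]; push_cast; omega
  -- combine: 4 * D.card * T ≤ (T + ζ) * (5β - 4c - 1)
  have h4 : 4 * (D.card : ℤ) * T ≤ (T + ζ) * (5 * (β : ℤ) - 4 * C.card - 1) := by
    calc 4 * (D.card : ℤ) * T = 4 * ((D.card : ℤ) * T) := by ring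
      _ ≤ 4 * (16 * ∑ w ∈ H, ((D.filter fun x => x ∈ B w).card : ℤ)) := by
          rw [← h2]; linarith
      _ = 16 * (4 * ∑ w ∈ H, ((D.filter fun x => x ∈ B w).card : ℤ)) := by ring
      _ = 16 * ∑ w ∈ H, 4 * ((D.filter fun x => x ∈ B w).card : ℤ) := by
          rw [Finset.mul_sum]
      _ ≤ 16 * (H.card * (5 * (β : ℤ) - 4 * C.card - 1)) := by linarith
      _ = (T + ζ) * (5 * (β : ℤ) - 4 * C.card - 1) := by rw [← hHT]; ring
  have hE : 0 ≤ 5 * (β : ℤ) - 4 * C.card - 1 := by push_cast; omega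
  have h5 : 8 * (D.card : ℤ) * T ≤ 3 * T * (5 * (β : ℤ) - 4 * C.card - 1) := by
    nlinarith [mul_nonneg (by linarith : (0:ℤ) ≤ T - 2 * ζ) hE]
  have h6 : 8 * (D.card : ℤ) ≤ 3 * (5 * (β : ℤ) - 4 * C.card - 1) := by
    nlinarith [mul_pos hTpos (by linarith : (0:ℤ) < 1)]
  have hCβ : (β : ℤ) ≤ C.card := by exact_mod_cast hC
  have : 2 * ((C.card : ℤ) + D.card) < 3 * β := by linarith
  exact_mod_cast this
end
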